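/- arXiv:2506.04935 — 3 statements merged into one kernel-verified Lean document; each statement's English description precedes it below -/
import Mathlib

section
/- Let S be a string of length n over an alphabet Σ with |Σ| ≥ 4, and P a substring of S. If the frequency of P in S can be reduced by y ≥ 1 via k substitutions with a letter # ∉ Σ, then the frequency of P in S can be reduced by at least y via k substitutions using only letters from Σ. -/
open Classical

/-- `p` is a period of the string (list) `P`. -/
def IsPeriodOf {α : Type*} (P : List α) (p : ℕ) : Prop :=
  0 < p ∧ ∀ i, i + p < P.length → P[i]? = P[i + p]?

/-- The smallest period of `P`. -/
noncomputable def minPeriod {α : Type*} (P : List α) : ℕ := sInf {p | IsPeriodOf P p}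

/-- `P` is periodic if its smallest period is at most `|P|/2`. -/
def ListPeriodic {α : Type*} (P : List α) : Prop := 2 * minPeriod P ≤ P.length

/-- `P` occurs in `S` starting at position `i`. -/
def OccursAt {α : Type*} (P S : List α) (i : ℕ) : Prop :=
  i + P.length ≤ S.length ∧ (S.drop i).take P.length = P

/-- The set of starting positions of occurrences of `P` in `S`. -/
noncomputable def occ {α : Type*} (P S : List α) : Finset ℕ :=
  (Finset.range (S.length + 1)).filter (fun i => OccursAt P S i)

/-- Hamming distance between two (equal-length) strings. -/
noncomputable def hamming {α : Type*} (S T : List α) : ℕ :=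
  ((List.range S.length).filter (fun i => S[i]? ≠ T[i]?)).length

/-- `P` is `(τ,k)`-resilient in `S`. -/
def Resilient {α : Type*} (P S : List α) (τ k : ℕ) : Prop :=
  ∀ S' : List α, S'.length = S.length → hamming S S' ≤ k → τ ≤ (occ P S').card

/-- The fragment `S[x..y]` (inclusive). -/
def frag {α : Type*} (S : List α) (x y : ℕ) : List α := (S.drop x).take (y - x + 1)

/-- The fragment `S[x..y]` is a run of `S`. -/
def IsRun {α : Type*} (S : List α) (x y : ℕ) : Prop :=
  x ≤ y ∧ y < S.length ∧ 2 * minPeriod (frag S x y) ≤ y - x + 1 ∧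
  (0 < x → ¬ IsPeriodOf (frag S (x - 1) y) (minPeriod (frag S x y))) ∧
  (y + 1 < S.length → ¬ IsPeriodOf (frag S x (y + 1)) (minPeriod (frag S x y)))

section Aux

variable {α : Type*}

/-- Pointwise characterization of `OccursAt`. -/
lemma occursAt_iff (Q T : List α) (i : ℕ) :
    OccursAt Q T i ↔ i + Q.length ≤ T.length ∧ ∀ s < Q.length, T[(i + s)]? = Q[s]? := by
  constructor
  · rintro ⟨h1, h2⟩
    refine ⟨h1, fun s hs => ?_⟩
    conv_rhs => rw [← h2]
    rw [List.getElem?_take_of_lt hs, List.getElem?_drop]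
  · rintro ⟨h1, h2⟩
    refine ⟨h1, List.ext_getElem? fun s => ?_⟩
    by_cases hs : s < Q.length
    · rw [List.getElem?_take_of_lt hs, List.getElem?_drop, h2 s hs]
    · push_neg at hs
      rw [List.getElem?_eq_none_iff.mpr ((List.length_take_le _ _).trans hs),
        List.getElem?_eq_none_iff.mpr hs]

lemma occ_map_some (P S₂ : List α) : occ (P.map some) (S₂.map some) = occ P S₂ := by
  unfold occ
  rw [List.length_map]
  apply Finset.filter_congr
  intro i _
  simp only [occursAt_iff, List.length_map, List.getElem?_map, eq_iff_iff]
  constructor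
  · rintro ⟨h1, h2⟩
    refine ⟨h1, fun s hs => ?_⟩
    have := h2 s hs
    exact Option.map_injective (Option.some_injective α) this
  · rintro ⟨h1, h2⟩
    exact ⟨h1, fun s hs => by rw [h2 s hs]⟩

lemma hamming_map_some (S S₂ : List α) : hamming (S.map some) (S₂.map some) = hamming S S₂ := by
  unfold hamming
  rw [List.length_map]
  congr 1
  apply List.filter_congr
  intro i _
  simp only [List.getElem?_map, decide_eq_decide]
  exact not_iff_not.mpr (Option.map_injective (Option.some_injective α)).eq_iff

/-- Filling one hole of `T` (a `none` position) with a suitable letter does not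
create any new occurrence of `P.map some`. -/
lemma fill_hole [Fintype α] (hcard : 4 ≤ Fintype.card α) (P : List α)
    (T : List (Option α)) (j : ℕ) (hj : T[j]? = some none) :
    ∃ c : α, occ (P.map some) (T.set j (some c)) ⊆ occ (P.map some) T := by
  have hjlen : j < T.length := by
    by_contra hc
    push_neg at hc
    rw [List.getElem?_eq_none_iff.mpr hc] at hj
    simp at hj
  -- the set of "dangerous" offsets
  set M : Finset ℕ := (Finset.range P.length).filter
    (fun t => t ≤ j ∧ ∀ s < P.length, s ≠ t →
      T[(j - t + s)]? = Option.map some (P[s]?)) with hM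
  -- key combinatorial lemma: offsets of three nested windows give equal letters
  have key : ∀ a ∈ M, ∀ b ∈ M, ∀ c ∈ M, a < b → b < c → P[a]? = P[c]? := by
    intro a ha b hb c hc hab hbc
    simp only [hM, Finset.mem_filter, Finset.mem_range] at ha hb hc
    obtain ⟨haP, haj, Wa⟩ := ha
    obtain ⟨hbP, hbj, Wb⟩ := hb
    obtain ⟨hcP, hcj, Wc⟩ := hc
    have step1 : P[a]? = P[(a + c - b)]? := by
      have e1 := Wb a haP (by omega)
      have e2 := Wc (a + c - b) (by omega) (by omega)
      have hpos : j - b + a = j - c + (a + c - b) := by omega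
      rw [hpos, e2] at e1
      exact (Option.map_injective (Option.some_injective α) e1).symm
    have step2 : P[(a + c - b)]? = P[c]? := by
      have e1 := Wa (a + c - b) (by omega) (by omega)
      have e2 := Wb c hcP (by omega)
      have hpos : j - a + (a + c - b) = j - b + c := by omega
      rw [hpos, e2] at e1
      exact (Option.map_injective (Option.some_injective α) e1).symm
    rw [step1, step2]
  -- the set of forbidden letters (as Option values)
  set F : Finset (Option α) := M.image (fun t => P[t]?) with hF
  have hFcard : F.card ≤ 2 := by
    by_cases hM2 : M.card ≤ 2
    · exact Finset.card_image_le.trans hM2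
    · push_neg at hM2
      have hMne : M.Nonempty := Finset.card_pos.mp (by omega)
      set a := M.max' hMne with hadef
      have haM : a ∈ M := M.max'_mem hMne
      have hMe : (M.erase a).Nonempty := by
        rw [← Finset.card_pos, Finset.card_erase_of_mem haM]; omega
      set b := (M.erase a).max' hMe with hbdef
      have hbM' : b ∈ M.erase a := (M.erase a).max'_mem hMe
      have hbM : b ∈ M := Finset.mem_of_mem_erase hbM'
      have hba : b < a := lt_of_le_of_ne (M.le_max' b hbM) (Finset.ne_of_mem_erase hbM')
      have hsub : F ⊆ {P[a]?, P[b]?} := by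
        intro x hx
        simp only [hF, Finset.mem_image] at hx
        obtain ⟨t, htM, rfl⟩ := hx
        rcases eq_or_ne t a with rfl | hta
        · simp
        rcases eq_or_ne t b with rfl | htb
        · simp
        have htb' : t < b := by
          refine lt_of_le_of_ne ?_ htb
          exact (M.erase a).le_max' t (Finset.mem_erase.mpr ⟨hta, htM⟩)
        have := key t htM b hbM a haM htb' hba
        simp only [Finset.mem_insert, Finset.mem_singleton]
        exact Or.inl this
      exact (Finset.card_le_card hsub).trans ((Finset.card_insert_le _ _).trans (by simp))
  -- pick a letter not in F
  have : ∃ c : α, some c ∉ F := by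
    by_contra hco
    push_neg at hco
    have hinj : Set.InjOn (fun c : α => some c) (Finset.univ : Finset α) := by
      intro x _ y _ h; exact Option.some_injective α h
    have := Finset.card_le_card_of_injOn (fun c : α => some c)
      (fun c _ => hco c) hinj
    rw [Finset.card_univ] at this
    omega
  obtain ⟨c, hcF⟩ := this
  refine ⟨c, fun i hi => ?_⟩
  simp only [occ, Finset.mem_filter, Finset.mem_range, List.length_set] at hi ⊢
  obtain ⟨hir, hocc⟩ := hi
  rw [occursAt_iff] at hocc
  rw [List.length_set] at hocc
  obtain ⟨hlen, hmatch⟩ := hocc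
  refine ⟨hir, (occursAt_iff _ _ _).mpr ⟨hlen, fun s hs => ?_⟩⟩
  by_cases hcov : i ≤ j ∧ j < i + P.length
  · -- covering window: derive contradiction with c ∉ F
    exfalso
    obtain ⟨hij, hji⟩ := hcov
    set t := j - i with htdef
    have hit : i + t = j := by omega
    have htP : t < P.length := by omega
    have htM : t ∈ M := by
      simp only [hM, Finset.mem_filter, Finset.mem_range]
      refine ⟨htP, by omega, fun s' hs' hst => ?_⟩
      have hne : i + s' ≠ j := by omega
      have := hmatch s' (by simpa using hs')
      rw [List.getElem?_set_ne (Ne.symm hne)] at this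
      have hji' : j - t + s' = i + s' := by omega
      rw [hji', this, List.getElem?_map]
    have hTc : (T.set j (some c))[j]? = some (some c) :=
      List.getElem?_set_self hjlen
    have := hmatch t (by simpa using htP)
    rw [hit, hTc, List.getElem?_map] at this
    apply hcF
    simp only [hF, Finset.mem_image]
    refine ⟨t, htM, ?_⟩
    cases hpt : P[t]? with
    | none => rw [hpt] at this; simp at this
    | some x =>
      rw [hpt] at this
      simp only [Option.map_some] at this
      obtain rfl : c = x := by injection this with h; injection h
      rfl
  · -- window doesn't cover j: values unchanged
    have hne : i + s ≠ j := by
      simp only [List.length_map] at hs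
      omega
    have := hmatch s hs
    rw [List.getElem?_set_ne (Ne.symm hne)] at this
    exact this

lemma hamming_set_le (S : List α) (T : List (Option α)) (j : ℕ) (c : α)
    (hj : T[j]? = some none) (hlen : T.length = S.length) :
    hamming (S.map some) (T.set j (some c)) ≤ hamming (S.map some) T := by
  unfold hamming
  rw [← List.countP_eq_length_filter, ← List.countP_eq_length_filter]
  apply List.countP_mono_left
  intro i hi
  simp only [decide_eq_true_eq]
  intro hne
  rcases eq_or_ne i j with rfl | hij
  · rw [hj, List.getElem?_map]
    have hjT : i < T.length := by
      by_contra hc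
      push_neg at hc
      rw [List.getElem?_eq_none_iff.mpr hc] at hj
      simp at hj
    cases h' : S[i]? with
    | none =>
      exfalso
      have := List.getElem?_eq_none_iff.mp h'
      omega
    | some a => simp
  · rw [List.getElem?_set_ne hij.symm] at hne
    exact hne

lemma countP_none_set_lt : ∀ (T : List (Option α)) (j : ℕ) (c : α),
    T[j]? = some none →
    (T.set j (some c)).countP (fun o => o.isNone) < T.countP (fun o => o.isNone) := by
  intro T
  induction T with
  | nil => intro j c hj; rw [List.getElem?_eq_none_iff.mpr (by simp)] at hj; simp at hj
  | cons x T ih =>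
    intro j c hj
    cases j with
    | zero =>
      obtain rfl : x = none := by simpa using hj
      simp [List.countP_cons]
    | succ j =>
      have hj' : T[j]? = some none := by simpa using hj
      have := ih j c hj'
      simp only [List.set_cons_succ, List.countP_cons]
      omega

/-- Main induction: fill all holes. -/
lemma main_aux [Fintype α] (hcard : 4 ≤ Fintype.card α) (P S : List α) :
    ∀ (N : ℕ) (T : List (Option α)), T.countP (fun o => o.isNone) ≤ N →
      T.length = S.length → ∀ k, hamming (S.map some) T ≤ k →
      ∃ S₂ : List α, S₂.length = S.length ∧ hamming S S₂ ≤ k ∧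
        (occ P S₂).card ≤ (occ (P.map some) T).card := by
  have hne : Nonempty α := Fintype.card_pos_iff.mp (by omega)
  obtain ⟨d⟩ := hne
  intro N
  induction N with
  | zero =>
    intro T hcnt hlen k hham
    have hnone : ∀ o ∈ T, o ≠ none := by
      intro o ho hon
      subst hon
      have := List.countP_pos_iff (p := fun o : Option α => o.isNone) (l := T) |>.mpr
        ⟨none, ho, by simp⟩
      omega
    refine ⟨T.map (fun o => o.getD d), ?_, ?_, ?_⟩
    case _ => rw [List.length_map, hlen]
    all_goals {
      have hTmap : (T.map (fun o => o.getD d)).map some = T := by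
        apply List.ext_getElem?
        intro n
        rw [List.getElem?_map, List.getElem?_map]
        cases h' : T[n]? with
        | none => rfl
        | some o =>
          have := hnone o (List.mem_of_getElem? h')
          cases o with
          | none => exact absurd rfl this
          | some a => rfl
      first
      | (rw [← hamming_map_some, hTmap]; exact hham)
      | (rw [← occ_map_some, hTmap])
    }
  | succ N ih =>
    intro T hcnt hlen k hham
    by_cases h0 : T.countP (fun o => o.isNone) = 0
    · exact ih T (by omega) hlen k hham
    · have : ∃ j : ℕ, T[j]? = some none := by
        have : none ∈ T := by
          rcases List.countP_pos_iff (p := fun o : Option α => o.isNone) (l := T) |>.mp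
            (by omega) with ⟨o, ho, hP⟩
          cases o with
          | none => exact ho
          | some a => simp at hP
        exact List.mem_iff_getElem?.mp this
      obtain ⟨j, hj⟩ := this
      obtain ⟨c, hsub⟩ := fill_hole hcard P T j hj
      have hcnt' := countP_none_set_lt T j c hj
      obtain ⟨S₂, h1, h2, h3⟩ := ih (T.set j (some c)) (by omega)
        (by rw [List.length_set, hlen]) k
        (le_trans (hamming_set_le S T j c hj hlen) hham)
      exact ⟨S₂, h1, h2, h3.trans (Finset.card_le_card hsub)⟩

end Aux

theorem stmt10 {α : Type*} [Fintype α] (hcard : 4 ≤ Fintype.card α)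
    (S P : List α) (hsub : (occ P S).Nonempty) (k y : ℕ) (hy : 1 ≤ y)
    (h : ∃ S₁ : List (Option α), S₁.length = S.length ∧
        hamming (S.map some) S₁ ≤ k ∧ (occ (P.map some) S₁).card + y ≤ (occ P S).card) :
    ∃ S₂ : List α, S₂.length = S.length ∧ hamming S S₂ ≤ k ∧
      (occ P S₂).card + y ≤ (occ P S).card := by
  obtain ⟨S₁, hlen, hham, hocc⟩ := h
  obtain ⟨S₂, h1, h2, h3⟩ := main_aux hcard P S (S₁.countP (fun o => o.isNone)) S₁
    le_rfl hlen k hham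
  exact ⟨S₂, h1, h2, by omega⟩
end

section
/- Let S be a string, P an aperiodic substring of S, and k a nonnegative integer. Any string S' with d_H(S,S') ≤ k contains at least |occ_S(P)| − 2k occurrences of P. Consequently, if |occ_S(P)| ≥ τ + 2k, then P is (τ,k)-resilient in S. -/
open Classical

lemma mem_occ' {α : Type*} {P S : List α} {i : ℕ} : i ∈ occ P S ↔ OccursAt P S i := by
  constructor
  · intro h; exact (Finset.mem_filter.mp h).2
  · intro h
    refine Finset.mem_filter.mpr ⟨Finset.mem_range.mpr ?_, h⟩
    have := h.1; omega

lemma occ_get' {α : Type*} {P S : List α} {i : ℕ} (h : OccursAt P S i) :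
    ∀ m, m < P.length → P[m]? = S[i + m]? := by
  intro m hm
  conv_lhs => rw [← h.2]
  simp [List.getElem?_take, List.getElem?_drop, hm]

lemma period_of_overlap' {α : Type*} {P S : List α} {a b : ℕ}
    (ha : OccursAt P S a) (hb : OccursAt P S b) (hab : a < b) :
    IsPeriodOf P (b - a) := by
  refine ⟨Nat.sub_pos_of_lt hab, fun m hm => ?_⟩
  have h1 := occ_get' ha (m + (b - a)) hm
  have h2 := occ_get' hb m (by omega)
  rw [h2, h1]
  congr 1
  omega

theorem stmt12 {α : Type*} (S P : List α) (hap : ¬ ListPeriodic P)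
    (hsub : (occ P S).Nonempty) (τ k : ℕ) :
    (∀ S' : List α, S'.length = S.length → hamming S S' ≤ k →
      (occ P S).card - 2 * k ≤ (occ P S').card) ∧
    (τ + 2 * k ≤ (occ P S).card → Resilient P S τ k) := by
  have hapL : P.length < 2 * minPeriod P := not_le.mp hap
  have main : ∀ S' : List α, S'.length = S.length → hamming S S' ≤ k →
      (occ P S).card - 2 * k ≤ (occ P S').card := by
    intro S' hlen hham
    classical
    set D : Finset ℕ :=
      ((List.range S.length).filter (fun i => S[i]? ≠ S'[i]?)).toFinset with hD
    have hDcard : D.card ≤ k :=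
      le_trans (List.toFinset_card_le _) hham
    have hmemD : ∀ j, j < S.length → S[j]? ≠ S'[j]? → j ∈ D := by
      intro j h1 h2
      rw [hD, List.mem_toFinset, List.mem_filter]
      exact ⟨List.mem_range.mpr h1, decide_eq_true h2⟩
    set lost : Finset ℕ := (occ P S) \ (occ P S') with hlost
    have hex : ∀ i ∈ lost, ∃ j, i ≤ j ∧ j < i + P.length ∧ S[j]? ≠ S'[j]? := by
      intro i hi
      rw [hlost, Finset.mem_sdiff] at hi
      obtain ⟨hiS, hiS'⟩ := hi
      rw [mem_occ'] at hiS
      by_contra hno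
      push_neg at hno
      apply hiS'
      rw [mem_occ']
      refine ⟨by have := hiS.1; omega, ?_⟩
      rw [← hiS.2]
      have hb1 : i + P.length ≤ S.length := hiS.1
      have hb2 : i + P.length ≤ S'.length := by omega
      apply List.ext_getElem
      · simp only [List.length_take, List.length_drop]
        omega
      intro n h1 h2
      rw [List.getElem_take, List.getElem_drop, List.getElem_take, List.getElem_drop]
      have hn : n < P.length := by
        have := h1; simp only [List.length_take, List.length_drop] at this; omega
      have heq := hno (i + n) (by omega) (by omega)
      rw [List.getElem?_eq_getElem (by omega), List.getElem?_eq_getElem (by omega)] at heq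
      exact Option.some.inj heq.symm
    choose! f hf1 hf2 hf3 using hex
    have hmaps : ∀ i ∈ lost, f i ∈ D := by
      intro i hi
      have hocc : OccursAt P S i := mem_occ'.mp (Finset.mem_sdiff.mp hi).1
      exact hmemD _ (by have h1 := hf2 i hi; have := hocc.1; omega) (hf3 i hi)
    have key : ∀ b ∈ D, (lost.filter (fun i => f i = b)).card ≤ 2 := by
      intro b _
      by_contra hc
      push_neg at hc
      obtain ⟨x, y, z, hx, hy, hz, hxy, hxz, hyz⟩ := Finset.two_lt_card_iff.mp hc
      have prop : ∀ w ∈ lost.filter (fun i => f i = b),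
          OccursAt P S w ∧ w ≤ b ∧ b < w + P.length := by
        intro w hw
        rw [Finset.mem_filter] at hw
        obtain ⟨hw1, hw2⟩ := hw
        have hocc := mem_occ'.mp (Finset.mem_sdiff.mp hw1).1
        exact ⟨hocc, hw2 ▸ hf1 w hw1, hw2 ▸ hf2 w hw1⟩
      have px := prop x hx
      have py := prop y hy
      have pz := prop z hz
      have key3 : ∀ a c d : ℕ, a < c → c < d →
          (OccursAt P S a ∧ a ≤ b ∧ b < a + P.length) →
          (OccursAt P S c ∧ c ≤ b ∧ b < c + P.length) →
          (OccursAt P S d ∧ d ≤ b ∧ b < d + P.length) → False := by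
        rintro a c d hac hcd ⟨ha, ha1, ha2⟩ ⟨hc', hc1, hc2⟩ ⟨hd, hd1, hd2⟩
        have m1 : minPeriod P ≤ c - a := Nat.sInf_le (period_of_overlap' ha hc' hac)
        have m2 : minPeriod P ≤ d - c := Nat.sInf_le (period_of_overlap' hc' hd hcd)
        omega
      rcases lt_trichotomy x y with h1 | h1 | h1
      · rcases lt_trichotomy y z with h2 | h2 | h2
        · exact key3 x y z h1 h2 px py pz
        · exact absurd h2 hyz
        · rcases lt_trichotomy x z with h3 | h3 | h3
          · exact key3 x z y h3 h2 px pz py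
          · exact absurd h3 hxz
          · exact key3 z x y h3 h1 pz px py
      · exact absurd h1 hxy
      · rcases lt_trichotomy x z with h3 | h3 | h3
        · exact key3 y x z h1 h3 py px pz
        · exact absurd h3 hxz
        · rcases lt_trichotomy y z with h2 | h2 | h2
          · exact key3 y z x h2 h3 py pz px
          · exact absurd h2 hyz
          · exact key3 z y x h2 h1 pz py px
    have hcard : lost.card ≤ 2 * k := by
      have h := Finset.card_le_mul_card_image_of_maps_to hmaps 2 key
      omega
    have hsplit : (occ P S).card ≤ (occ P S').card + lost.card := by
      have hsub2 : occ P S ⊆ (occ P S') ∪ lost := by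
        intro i hi
        by_cases h : i ∈ occ P S'
        · exact Finset.mem_union_left _ h
        · exact Finset.mem_union_right _ (Finset.mem_sdiff.mpr ⟨hi, h⟩)
      calc (occ P S).card ≤ ((occ P S') ∪ lost).card := Finset.card_le_card hsub2
        _ ≤ _ := Finset.card_union_le _ _
    omega
  refine ⟨main, fun hτ S' hlen hham => ?_⟩
  have := main S' hlen hham
  omega
end

section
/- Let S be a string, P a periodic substring of S, and k ≥ 0 an integer. If the occurrences of P in S belong to at least τ + 2k distinct runs of S with period per(P), then P is (τ,k)-resilient in S. -/
open Classical

section Helpers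

variable {α : Type*}

lemma minPeriod_isPeriod (P : List α) : IsPeriodOf P (minPeriod P) := by
  have h : IsPeriodOf P (P.length + 1) := ⟨Nat.succ_pos _, fun i hi => by omega⟩
  exact Nat.sInf_mem (s := {p | IsPeriodOf P p}) ⟨_, h⟩

lemma minPeriod_pos (P : List α) : 0 < minPeriod P := (minPeriod_isPeriod P).1

lemma frag_get? (S : List α) (x y i : ℕ) (h : i < y - x + 1) :
    (frag S x y)[i]? = S[x + i]? := by
  unfold frag
  rw [List.getElem?_take_of_lt h, List.getElem?_drop]

lemma frag_length (S : List α) (x y : ℕ) (hxy : x ≤ y) (hy : y < S.length) :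
    (frag S x y).length = y - x + 1 := by
  unfold frag
  rw [List.length_take, List.length_drop]
  omega

/-- Period condition expressed in `S`-coordinates. -/
def PerOn (S : List α) (x y p : ℕ) : Prop :=
  ∀ j, x ≤ j → j + p ≤ y → S[j]? = S[j + p]?

lemma isPeriod_frag_iff (S : List α) (x y p : ℕ) (hxy : x ≤ y) (hy : y < S.length) :
    IsPeriodOf (frag S x y) p ↔ 0 < p ∧ PerOn S x y p := by
  rw [IsPeriodOf, frag_length S x y hxy hy]
  constructor
  · rintro ⟨hp, h⟩
    refine ⟨hp, fun j hj1 hj2 => ?_⟩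
    have h2 := h (j - x) (by omega)
    rw [frag_get? S x y _ (by omega), frag_get? S x y _ (by omega)] at h2
    convert h2 using 2 <;> omega
  · rintro ⟨hp, h⟩
    refine ⟨hp, fun i hi => ?_⟩
    rw [frag_get? S x y _ (by omega), frag_get? S x y _ (by omega)]
    have h2 := h (x + i) (by omega) (by omega)
    convert h2 using 2
    omega

lemma perOn_glue {S : List α} {a1 b1 a2 b2 p : ℕ}
    (h1 : PerOn S a1 b1 p) (h2 : PerOn S a2 b2 p)
    (hov : max a1 a2 + p ≤ min b1 b2 + 1) :
    PerOn S (min a1 a2) (max b1 b2) p := by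
  intro j hj1 hj2
  by_cases hM : max a1 a2 ≤ j
  · by_cases hb : j + p ≤ b1
    · exact h1 j (by omega) hb
    · exact h2 j (by omega) (by omega)
  · by_cases ha : a1 ≤ a2
    · exact h1 j (by omega) (by omega)
    · exact h2 j (by omega) (by omega)

lemma run_not_sub {S : List α} {a1 b1 a2 b2 p : ℕ}
    (h1 : IsRun S a1 b1) (h2 : IsRun S a2 b2)
    (hp1 : minPeriod (frag S a1 b1) = p) (hp2 : minPeriod (frag S a2 b2) = p)
    (hov : max a1 a2 + p ≤ min b1 b2 + 1)
    (hlt : a1 < a2 ∨ (a1 = a2 ∧ b1 < b2)) : False := by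
  obtain ⟨hxy1, hy1, _, hl1, hr1⟩ := h1
  obtain ⟨hxy2, hy2, _, hl2, hr2⟩ := h2
  have hp : 0 < p := hp1 ▸ minPeriod_pos _
  have hper1 : PerOn S a1 b1 p :=
    ((isPeriod_frag_iff S a1 b1 p hxy1 hy1).1 (hp1 ▸ minPeriod_isPeriod _)).2
  have hper2 : PerOn S a2 b2 p :=
    ((isPeriod_frag_iff S a2 b2 p hxy2 hy2).1 (hp2 ▸ minPeriod_isPeriod _)).2
  have hglue := perOn_glue hper1 hper2 hov
  rcases hlt with hlt | ⟨heq, hlt⟩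
  · refine hl2 (by omega) ?_
    rw [hp2, isPeriod_frag_iff S _ _ _ (by omega) hy2]
    exact ⟨hp, fun j hj1 hj2 => hglue j (by omega) (by omega)⟩
  · refine hr1 (by omega) ?_
    rw [hp1, isPeriod_frag_iff S _ _ _ (by omega) (by omega)]
    exact ⟨hp, fun j hj1 hj2 => hglue j (by omega) (by omega)⟩

lemma runs_overlap {S : List α} {a1 b1 a2 b2 p : ℕ}
    (h1 : IsRun S a1 b1) (h2 : IsRun S a2 b2)
    (hp1 : minPeriod (frag S a1 b1) = p) (hp2 : minPeriod (frag S a2 b2) = p)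
    (hne : (a1, b1) ≠ (a2, b2))
    (hov : max a1 a2 + p ≤ min b1 b2 + 1) : False := by
  rcases Nat.lt_trichotomy a1 a2 with h | h | h
  · exact run_not_sub h1 h2 hp1 hp2 hov (Or.inl h)
  · rcases Nat.lt_trichotomy b1 b2 with hb | hb | hb
    · exact run_not_sub h1 h2 hp1 hp2 hov (Or.inr ⟨h, hb⟩)
    · exact hne (by simp [h, hb])
    · exact run_not_sub h2 h1 hp2 hp1 (by omega) (Or.inr ⟨h.symm, hb⟩)
  · exact run_not_sub h2 h1 hp2 hp1 (by omega) (Or.inl h)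

lemma three_runs {S : List α} {p d : ℕ} {r1 r2 r3 : ℕ × ℕ}
    (h1 : IsRun S r1.1 r1.2) (h2 : IsRun S r2.1 r2.2) (h3 : IsRun S r3.1 r3.2)
    (hp1 : minPeriod (frag S r1.1 r1.2) = p) (hp2 : minPeriod (frag S r2.1 r2.2) = p)
    (hp3 : minPeriod (frag S r3.1 r3.2) = p)
    (hne12 : r1 ≠ r2) (hne13 : r1 ≠ r3) (hne23 : r2 ≠ r3)
    (hd1 : r1.1 ≤ d ∧ d ≤ r1.2) (hd2 : r2.1 ≤ d ∧ d ≤ r2.2)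
    (hd3 : r3.1 ≤ d ∧ d ≤ r3.2) : False := by
  have hp : 0 < p := hp1 ▸ minPeriod_pos _
  have hl1 : 2 * p ≤ r1.2 - r1.1 + 1 := hp1 ▸ h1.2.2.1
  have hl2 : 2 * p ≤ r2.2 - r2.1 + 1 := hp2 ▸ h2.2.2.1
  have hl3 : 2 * p ≤ r3.2 - r3.1 + 1 := hp3 ▸ h3.2.2.1
  have hne12' : (r1.1, r1.2) ≠ (r2.1, r2.2) := by simpa using hne12
  have hne13' : (r1.1, r1.2) ≠ (r3.1, r3.2) := by simpa using hne13
  have hne23' : (r2.1, r2.2) ≠ (r3.1, r3.2) := by simpa using hne23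
  have c1 : r1.1 + p ≤ d ∨ d + p ≤ r1.2 := by omega
  have c2 : r2.1 + p ≤ d ∨ d + p ≤ r2.2 := by omega
  have c3 : r3.1 + p ≤ d ∨ d + p ≤ r3.2 := by omega
  rcases c1 with c1 | c1 <;> rcases c2 with c2 | c2 <;> rcases c3 with c3 | c3 <;>
    first
      | exact runs_overlap h1 h2 hp1 hp2 hne12' (by omega)
      | exact runs_overlap h1 h3 hp1 hp3 hne13' (by omega)
      | exact runs_overlap h2 h3 hp2 hp3 hne23' (by omega)

lemma occursAt_of_agree {P S S' : List α} {i : ℕ} (hocc : OccursAt P S i)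
    (hlen : S'.length = S.length)
    (hagree : ∀ j, i ≤ j → j < i + P.length → S[j]? = S'[j]?) :
    OccursAt P S' i := by
  obtain ⟨hle, heq⟩ := hocc
  refine ⟨by omega, ?_⟩
  have hsame : (S'.drop i).take P.length = (S.drop i).take P.length := by
    apply List.ext_getElem?
    intro n
    by_cases hn : n < P.length
    · rw [List.getElem?_take_of_lt hn, List.getElem?_take_of_lt hn, List.getElem?_drop, List.getElem?_drop]
      exact (hagree (i + n) (by omega) (by omega)).symm
    · have t1 : ((S'.drop i).take P.length).length ≤ n := by
        rw [List.length_take, List.length_drop]; omega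
      have t2 : ((S.drop i).take P.length).length ≤ n := by
        rw [List.length_take, List.length_drop]; omega
      rw [List.getElem?_eq_none_iff.2 t1, List.getElem?_eq_none_iff.2 t2]
  rw [hsame, heq]

end Helpers

theorem stmt14 {α : Type*} (S P : List α) (hper : ListPeriodic P) (τ k : ℕ)
    (R : Finset (ℕ × ℕ)) (hcard : τ + 2 * k ≤ R.card)
    (hruns : ∀ r ∈ R, IsRun S r.1 r.2 ∧ minPeriod (frag S r.1 r.2) = minPeriod P ∧
      ∃ i, OccursAt P S i ∧ r.1 ≤ i ∧ i + P.length ≤ r.2 + 1) :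
    Resilient P S τ k := by
  intro S' hlen hham
  have hp : 0 < minPeriod P := minPeriod_pos P
  have hPlen : 2 * minPeriod P ≤ P.length := hper
  -- choose an occurrence for each run
  have hex : ∀ r : ℕ × ℕ, ∃ i, r ∈ R →
      OccursAt P S i ∧ r.1 ≤ i ∧ i + P.length ≤ r.2 + 1 := by
    intro r
    by_cases hr : r ∈ R
    · obtain ⟨i, hi⟩ := (hruns r hr).2.2
      exact ⟨i, fun _ => hi⟩
    · exact ⟨0, fun h => absurd h hr⟩
  choose f hf using hex
  -- the set of modified positions
  set D : Finset ℕ :=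
    ((List.range S.length).filter (fun i => S[i]? ≠ S'[i]?)).toFinset with hDdef
  have hDcard : D.card ≤ k := by
    refine le_trans (List.toFinset_card_le _) ?_
    exact hham
  have hagree : ∀ j, j ∉ D → S[j]? = S'[j]? := by
    intro j hj
    by_cases hjl : j < S.length
    · by_contra hne
      exact hj (List.mem_toFinset.2 (List.mem_filter.2
        ⟨List.mem_range.2 hjl, by simpa using hne⟩))
    · rw [List.getElem?_eq_none_iff.2 (by omega), List.getElem?_eq_none_iff.2 (by omega)]
  -- split runs into good and bad ones
  have key := Finset.card_filter_add_card_filter_not (s := R)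
    (p := fun r : ℕ × ℕ => ∀ d ∈ D, ¬(r.1 ≤ d ∧ d ≤ r.2))
  have htwo : ∀ d : ℕ, (R.filter (fun r : ℕ × ℕ => r.1 ≤ d ∧ d ≤ r.2)).card ≤ 2 := by
    intro d
    by_contra hgt
    push_neg at hgt
    obtain ⟨r1, r2, r3, hm1, hm2, hm3, h12, h13, h23⟩ := Finset.two_lt_card_iff.1 hgt
    rw [Finset.mem_filter] at hm1 hm2 hm3
    exact three_runs (hruns r1 hm1.1).1 (hruns r2 hm2.1).1 (hruns r3 hm3.1).1
      (hruns r1 hm1.1).2.1 (hruns r2 hm2.1).2.1 (hruns r3 hm3.1).2.1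
      h12 h13 h23 hm1.2 hm2.2 hm3.2
  have hBcard :
      (R.filter (fun r : ℕ × ℕ => ¬ ∀ d ∈ D, ¬(r.1 ≤ d ∧ d ≤ r.2))).card ≤ 2 * k := by
    have hsub : (R.filter (fun r : ℕ × ℕ => ¬ ∀ d ∈ D, ¬(r.1 ≤ d ∧ d ≤ r.2))) ⊆
        D.biUnion (fun d => R.filter (fun r : ℕ × ℕ => r.1 ≤ d ∧ d ≤ r.2)) := by
      intro r hr
      rw [Finset.mem_filter] at hr
      obtain ⟨hrR, hbad⟩ := hr
      push_neg at hbad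
      obtain ⟨d, hd, hd1, hd2⟩ := hbad
      exact Finset.mem_biUnion.2 ⟨d, hd, Finset.mem_filter.2 ⟨hrR, hd1, hd2⟩⟩
    calc (R.filter (fun r : ℕ × ℕ => ¬ ∀ d ∈ D, ¬(r.1 ≤ d ∧ d ≤ r.2))).card
        ≤ (D.biUnion (fun d => R.filter (fun r : ℕ × ℕ => r.1 ≤ d ∧ d ≤ r.2))).card :=
          Finset.card_le_card hsub
      _ ≤ ∑ d ∈ D, (R.filter (fun r : ℕ × ℕ => r.1 ≤ d ∧ d ≤ r.2)).card :=
          Finset.card_biUnion_le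
      _ ≤ ∑ _d ∈ D, 2 := Finset.sum_le_sum (fun d _ => htwo d)
      _ = 2 * D.card := by rw [Finset.sum_const, smul_eq_mul, mul_comm]
      _ ≤ 2 * k := by omega
  have hGcard : τ ≤ (R.filter (fun r : ℕ × ℕ => ∀ d ∈ D, ¬(r.1 ≤ d ∧ d ≤ r.2))).card := by
    omega
  refine le_trans hGcard ?_
  apply Finset.card_le_card_of_injOn f
  · intro r hr
    rw [Finset.mem_coe, Finset.mem_filter] at hr
    obtain ⟨hrR, hgood⟩ := hr
    obtain ⟨hocc1, hi1, hi2⟩ := hf r hrR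
    have hocc' : OccursAt P S' (f r) :=
      occursAt_of_agree hocc1 hlen
        (fun j hj1 hj2 => hagree j (fun hjD => hgood j hjD ⟨by omega, by omega⟩))
    refine Finset.mem_filter.2 ⟨Finset.mem_range.2 ?_, hocc'⟩
    have := hocc'.1
    omega
  · intro r hr r' hr' hff
    by_contra hne
    rw [Finset.mem_coe, Finset.mem_filter] at hr hr'
    obtain ⟨h1, hq1, -⟩ := hruns r hr.1
    obtain ⟨h2, hq2, -⟩ := hruns r' hr'.1
    obtain ⟨-, hi1, hi2⟩ := hf r hr.1
    obtain ⟨-, hi1', hi2'⟩ := hf r' hr'.1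
    rw [hff] at hi1 hi2
    exact runs_overlap h1 h2 hq1 hq2 (by simpa using hne) (by omega)
end
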